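/- Let X be a family of nonnegative integrable random variables on (Ω, F, P) closed under pairwise minimum, and let G be a sub-σ-algebra of F. Then the G-conditional expectation commutes with the essential infimum: E[ess inf_{X∈X} X | G] = ess inf_{X∈X} E[X | G] almost surely. -/

import Mathlib

open MeasureTheory Filter Topology

/-- Running minima of a sequence of functions. -/
noncomputable def runMin {Ω : Type*} (Y : ℕ → Ω → ℝ) : ℕ → Ω → ℝ
  | 0 => Y 0
  | n + 1 => fun ω => min (runMin Y n ω) (Y (n + 1) ω)

/-- For a family of nonnegative integrable random variables closed under pairwise minimum,
the conditional expectation with respect to a sub-σ-algebra commutes with the essential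
infimum: `E[ess inf 𝒳 | G] = ess inf {E[X|G] : X ∈ 𝒳}` a.s. -/
theorem stmt_1 {Ω : Type*} {m0 : MeasurableSpace Ω} (P : Measure Ω) [IsProbabilityMeasure P]
    (m : MeasurableSpace Ω) (hm : m ≤ m0)
    (𝒳 : Set (Ω → ℝ)) (h𝒳ne : 𝒳.Nonempty)
    (hint : ∀ X ∈ 𝒳, Integrable X P)
    (hpos : ∀ X ∈ 𝒳, 0 ≤ᵐ[P] X)
    (hmin : ∀ X ∈ 𝒳, ∀ Y ∈ 𝒳, (fun ω => min (X ω) (Y ω)) ∈ 𝒳)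
    -- `Xstar` is the essential infimum of the family `𝒳`
    (Xstar : Ω → ℝ)
    (hXstar_lb : ∀ X ∈ 𝒳, Xstar ≤ᵐ[P] X)
    (hXstar_great : ∀ Y : Ω → ℝ, (∀ X ∈ 𝒳, Y ≤ᵐ[P] X) → Y ≤ᵐ[P] Xstar)
    -- `Ystar` is the essential infimum of the family of conditional expectations
    (Ystar : Ω → ℝ)
    (hYstar_lb : ∀ X ∈ 𝒳, Ystar ≤ᵐ[P] P[X|m])
    (hYstar_great : ∀ Y : Ω → ℝ, (∀ X ∈ 𝒳, Y ≤ᵐ[P] P[X|m]) → Y ≤ᵐ[P] Ystar) :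
    P[Xstar|m] =ᵐ[P] Ystar := by
  classical
  set S : Set ℝ := (fun X : Ω → ℝ => ∫ ω, X ω ∂P) '' 𝒳 with hS
  have hSne : S.Nonempty := h𝒳ne.image _
  have hSbdd : BddBelow S := by
    refine ⟨0, ?_⟩
    rintro _ ⟨X, hX, rfl⟩
    exact integral_nonneg_of_ae (hpos X hX)
  set L : ℝ := sInf S with hL
  have hLle : ∀ X ∈ 𝒳, L ≤ ∫ ω, X ω ∂P := fun X hX => csInf_le hSbdd ⟨X, hX, rfl⟩
  -- choose a minimizing sequence
  have hseq : ∀ k : ℕ, ∃ X ∈ 𝒳, ∫ ω, X ω ∂P < L + 1 / (k + 1) := by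
    intro k
    obtain ⟨a, ⟨X, hX, rfl⟩, ha⟩ :=
      Real.lt_sInf_add_pos hSne (by positivity : (0:ℝ) < 1 / (k + 1))
    exact ⟨X, hX, ha⟩
  choose Y hYmem hYlt using hseq
  -- running minima
  set Z : ℕ → Ω → ℝ := runMin Y with hZdef
  have hZmem : ∀ n, Z n ∈ 𝒳 := by
    intro n; induction n with
    | zero => exact hYmem 0
    | succ n ih => exact hmin _ ih _ (hYmem (n + 1))
  have hZint : ∀ n, Integrable (Z n) P := fun n => hint _ (hZmem n)
  have hZsucc : ∀ n ω, Z (n + 1) ω ≤ Z n ω := fun n ω => min_le_left _ _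
  have hZanti : ∀ ω, Antitone fun n => Z n ω :=
    fun ω => antitone_nat_of_succ_le (fun n => hZsucc n ω)
  have hZleY : ∀ n ω, Z n ω ≤ Y n ω := by
    intro n ω; cases n with
    | zero => exact le_rfl
    | succ n => exact min_le_right _ _
  have hZpos : ∀ᵐ ω ∂P, ∀ n, 0 ≤ Z n ω := ae_all_iff.2 fun n => hpos _ (hZmem n)
  have hLZ : ∀ n, L ≤ ∫ ω, Z n ω ∂P := fun n => hLle _ (hZmem n)
  -- integrals of Z n tend to L
  have hZtend : Tendsto (fun n => ∫ ω, Z n ω ∂P) atTop (𝓝 L) := by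
    have hub : ∀ n : ℕ, ∫ ω, Z n ω ∂P ≤ L + 1 / (n + 1) := fun n =>
      le_of_lt (lt_of_le_of_lt
        (integral_mono (hZint n) (hint _ (hYmem n)) (fun ω => hZleY n ω)) (hYlt n))
    have h2 : Tendsto (fun n : ℕ => L + 1 / (n + 1 : ℝ)) atTop (𝓝 (L + 0)) :=
      tendsto_const_nhds.add tendsto_one_div_add_atTop_nhds_zero_nat
    rw [add_zero] at h2
    exact tendsto_of_tendsto_of_tendsto_of_le_of_le tendsto_const_nhds h2 hLZ hub
  -- the pointwise infimum W
  set W : Ω → ℝ := fun ω => ⨅ n, Z n ω with hWdef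
  have hconv : ∀ᵐ ω ∂P, Tendsto (fun n => Z n ω) atTop (𝓝 (W ω)) ∧
      (∀ n, W ω ≤ Z n ω) ∧ 0 ≤ W ω := by
    filter_upwards [hZpos] with ω hω
    have hbdd : BddBelow (Set.range fun n => Z n ω) :=
      ⟨0, by rintro _ ⟨n, rfl⟩; exact hω n⟩
    exact ⟨tendsto_atTop_ciInf (hZanti ω) hbdd, fun n => ciInf_le hbdd n,
      le_ciInf fun n => hω n⟩
  have hWm : @AEStronglyMeasurable Ω ℝ _ m0 m0 W P :=
    aestronglyMeasurable_of_tendsto_ae atTop (fun n => (hZint n).1)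
      (hconv.mono fun ω hω => hω.1)
  have hWint : Integrable W P := by
    refine (hZint 0).mono hWm ?_
    filter_upwards [hconv] with ω hω
    rw [Real.norm_eq_abs, Real.norm_eq_abs, abs_of_nonneg hω.2.2]
    exact le_trans (hω.2.1 0) (le_abs_self _)
  have hZboundae : ∀ n : ℕ, ∀ᵐ ω ∂P, ‖Z n ω‖ ≤ Z 0 ω := by
    intro n
    filter_upwards [hZpos] with ω hω
    rw [Real.norm_eq_abs, abs_of_nonneg (hω n)]
    exact hZanti ω (Nat.zero_le n)
  have hWL : ∫ ω, W ω ∂P = L := by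
    have := tendsto_integral_of_dominated_convergence (Z 0) (fun n => (hZint n).1)
      (hZint 0) hZboundae (hconv.mono fun ω hω => hω.1)
    exact tendsto_nhds_unique this hZtend
  -- W is an a.e. lower bound of 𝒳
  have hWlb : ∀ X ∈ 𝒳, W ≤ᵐ[P] X := by
    intro X hX
    have hmem : ∀ n, (fun ω => min (Z n ω) (X ω)) ∈ 𝒳 := fun n => hmin _ (hZmem n) _ hX
    have hminm : @AEStronglyMeasurable Ω ℝ _ m0 m0 (fun ω => min (W ω) (X ω)) P :=
      hWm.inf (hint X hX).1
    have hminconv : ∀ᵐ ω ∂P, Tendsto (fun n => min (Z n ω) (X ω)) atTop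
        (𝓝 (min (W ω) (X ω))) := by
      filter_upwards [hconv] with ω hω
      exact hω.1.min tendsto_const_nhds
    have hminbound : ∀ n : ℕ, ∀ᵐ ω ∂P, ‖min (Z n ω) (X ω)‖ ≤ Z 0 ω := by
      intro n
      filter_upwards [hZpos, hpos X hX] with ω hω hωX
      rw [Real.norm_eq_abs, abs_of_nonneg (le_min (hω n) hωX)]
      exact le_trans (min_le_left _ _) (hZanti ω (Nat.zero_le n))
    have htt : Tendsto (fun n => ∫ ω, min (Z n ω) (X ω) ∂P) atTop
        (𝓝 (∫ ω, min (W ω) (X ω) ∂P)) :=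
      tendsto_integral_of_dominated_convergence (Z 0)
        (fun n => (hint _ (hmem n)).1) (hZint 0) hminbound hminconv
    have hge : L ≤ ∫ ω, min (W ω) (X ω) ∂P :=
      ge_of_tendsto htt (Eventually.of_forall fun n => hLle _ (hmem n))
    have hminint : Integrable (fun ω => min (W ω) (X ω)) P := by
      refine (hZint 0).mono hminm ?_
      filter_upwards [hconv, hpos X hX] with ω hω hωX
      rw [Real.norm_eq_abs, abs_of_nonneg (le_min hω.2.2 hωX)]
      exact le_trans (min_le_left _ _) (le_trans (hω.2.1 0) (le_abs_self _))
    have hdiffnn : 0 ≤ᵐ[P] fun ω => W ω - min (W ω) (X ω) :=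
      Eventually.of_forall fun ω => sub_nonneg.2 (min_le_left _ _)
    have hdiff : (fun ω => W ω - min (W ω) (X ω)) =ᵐ[P] 0 := by
      rw [← integral_eq_zero_iff_of_nonneg_ae hdiffnn (hWint.sub hminint)]
      have hile : ∫ ω, (W ω - min (W ω) (X ω)) ∂P ≤ 0 := by
        rw [integral_sub hWint hminint, hWL]
        linarith
      have hige : 0 ≤ ∫ ω, (W ω - min (W ω) (X ω)) ∂P :=
        integral_nonneg_of_ae hdiffnn
      linarith
    filter_upwards [hdiff] with ω hω
    have hmineq : min (W ω) (X ω) = W ω := by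
      have := sub_eq_zero.1 hω
      linarith [min_le_left (W ω) (X ω)]
    exact min_eq_left_iff.1 hmineq
  -- Xstar = W a.e.
  have hXW : Xstar =ᵐ[P] W := by
    have h2 : Xstar ≤ᵐ[P] W := by
      have hall : ∀ᵐ ω ∂P, ∀ n, Xstar ω ≤ Z n ω :=
        ae_all_iff.2 fun n => hXstar_lb _ (hZmem n)
      filter_upwards [hall, hconv] with ω h hc
      exact ge_of_tendsto hc.1 (Eventually.of_forall h)
    exact h2.antisymm (hXstar_great W hWlb)
  -- the conditional expectations
  set C : ℕ → Ω → ℝ := fun n => P[Z n|m] with hCdef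
  have hCint : ∀ n, Integrable (C n) P := fun n => integrable_condExp
  have hCpos : ∀ᵐ ω ∂P, ∀ n, 0 ≤ C n ω :=
    ae_all_iff.2 fun n => condExp_nonneg (hpos _ (hZmem n))
  have hCanti : ∀ᵐ ω ∂P, ∀ n, C (n + 1) ω ≤ C n ω :=
    ae_all_iff.2 fun n =>
      condExp_mono (hZint (n + 1)) (hZint n) (Eventually.of_forall (hZsucc n))
  set V : Ω → ℝ := fun ω => ⨅ n, C n ω with hVdef
  have hconvC : ∀ᵐ ω ∂P, Tendsto (fun n => C n ω) atTop (𝓝 (V ω)) ∧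
      (∀ n, V ω ≤ C n ω) ∧ 0 ≤ V ω := by
    filter_upwards [hCpos, hCanti] with ω hω hωa
    have hanti : Antitone fun n => C n ω := antitone_nat_of_succ_le hωa
    have hbdd : BddBelow (Set.range fun n => C n ω) :=
      ⟨0, by rintro _ ⟨n, rfl⟩; exact hω n⟩
    exact ⟨tendsto_atTop_ciInf hanti hbdd, fun n => ciInf_le hbdd n,
      le_ciInf fun n => hω n⟩
  have hVm : @AEStronglyMeasurable Ω ℝ _ m0 m0 V P :=
    aestronglyMeasurable_of_tendsto_ae atTop (fun n => (hCint n).1)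
      (hconvC.mono fun ω hω => hω.1)
  have hVint : Integrable V P := by
    refine (hCint 0).mono hVm ?_
    filter_upwards [hconvC] with ω hω
    rw [Real.norm_eq_abs, abs_of_nonneg hω.2.2]
    exact le_trans (hω.2.1 0) (le_abs_self _)
  have hCL : ∀ n, ∫ ω, C n ω ∂P = ∫ ω, Z n ω ∂P := fun n => integral_condExp hm
  have hCbound : ∀ n : ℕ, ∀ᵐ ω ∂P, ‖C n ω‖ ≤ C 0 ω := by
    intro n
    have hle : C n ≤ᵐ[P] C 0 :=
      condExp_mono (hZint n) (hZint 0)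
        (Eventually.of_forall fun ω => hZanti ω (Nat.zero_le n))
    filter_upwards [hCpos, hle] with ω hω hω0
    rw [Real.norm_eq_abs, abs_of_nonneg (hω n)]
    exact hω0
  have hVL : ∫ ω, V ω ∂P = L := by
    have h1 := tendsto_integral_of_dominated_convergence (C 0) (fun n => (hCint n).1)
      (hCint 0) hCbound (hconvC.mono fun ω hω => hω.1)
    have h2 : Tendsto (fun n => ∫ ω, C n ω ∂P) atTop (𝓝 L) := by
      simp only [hCL]; exact hZtend
    exact tendsto_nhds_unique h1 h2
  -- E[W|m] ≤ V a.e.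
  have hEWV : P[W|m] ≤ᵐ[P] V := by
    have hall : ∀ᵐ ω ∂P, ∀ n, (P[W|m]) ω ≤ C n ω := by
      refine ae_all_iff.2 fun n => condExp_mono hWint (hZint n) ?_
      filter_upwards [hconv] with ω hω using hω.2.1 n
    filter_upwards [hall, hconvC] with ω h hc
    exact ge_of_tendsto hc.1 (Eventually.of_forall h)
  -- E[W|m] = V a.e. (equal integrals)
  have hEWint : Integrable (P[W|m]) P := integrable_condExp
  have hEWL : ∫ ω, (P[W|m]) ω ∂P = L := by rw [integral_condExp hm, hWL]
  have hVEW : V =ᵐ[P] P[W|m] := by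
    have hdiffnn : 0 ≤ᵐ[P] fun ω => V ω - (P[W|m]) ω := by
      filter_upwards [hEWV] with ω hω using sub_nonneg.2 hω
    have hdiff : (fun ω => V ω - (P[W|m]) ω) =ᵐ[P] 0 := by
      rw [← integral_eq_zero_iff_of_nonneg_ae hdiffnn (hVint.sub hEWint)]
      rw [integral_sub hVint hEWint, hVL, hEWL, sub_self]
    filter_upwards [hdiff] with ω hω
    simp only [Pi.zero_apply] at hω
    exact sub_eq_zero.1 hω
  -- Ystar ≤ V a.e.
  have hYV : Ystar ≤ᵐ[P] V := by
    have hall : ∀ᵐ ω ∂P, ∀ n, Ystar ω ≤ C n ω :=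
      ae_all_iff.2 fun n => hYstar_lb _ (hZmem n)
    filter_upwards [hall, hconvC] with ω h hc
    exact ge_of_tendsto hc.1 (Eventually.of_forall h)
  -- E[W|m] ≤ Ystar a.e.
  have hEWY : P[W|m] ≤ᵐ[P] Ystar :=
    hYstar_great _ fun X hX => condExp_mono hWint (hint X hX) (hWlb X hX)
  -- conclude
  have hfinal : P[W|m] =ᵐ[P] Ystar := by
    refine hEWY.antisymm ?_
    calc Ystar ≤ᵐ[P] V := hYV
    _ =ᵐ[P] P[W|m] := hVEW
  exact (condExp_congr_ae hXW).trans hfinal
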